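/- Let X be a real Banach space. Suppose that for every real Banach space Y and every compact operator u : Y → X there are a quotient Q of X together with a compact operator v : Q → X and a compact operator w : Y → Q** such that u = v** ∘ w. Then X has property (𝒦). -/

import Mathlib

set_option maxSynthPendingDepth 3

open Filter Topology Metric NormedSpace Function

/-- `u` is a finite-rank operator: its range is finite-dimensional. -/
def FinRankOp {X Y : Type*} [NormedAddCommGroup X] [NormedSpace ℝ X]
    [NormedAddCommGroup Y] [NormedSpace ℝ Y] (u : X →L[ℝ] Y) : Prop :=
  FiniteDimensional ℝ (LinearMap.range (u : X →ₗ[ℝ] Y))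

/-- `u` is approximable: a limit in operator norm of finite-rank operators. -/
def ApproxOp {X Y : Type*} [NormedAddCommGroup X] [NormedSpace ℝ X]
    [NormedAddCommGroup Y] [NormedSpace ℝ Y] (u : X →L[ℝ] Y) : Prop :=
  u ∈ closure {f : X →L[ℝ] Y | FinRankOp f}

/-- `u` is a compact operator: it maps the closed unit ball to a relatively compact set. -/
def CompactOp {X Y : Type*} [NormedAddCommGroup X] [NormedSpace ℝ X]
    [NormedAddCommGroup Y] [NormedSpace ℝ Y] (u : X →L[ℝ] Y) : Prop :=
  IsCompact (closure (u '' Metric.closedBall 0 1))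

/-- Property (𝒦): every compact subset is contained in the closure of the image of the
closed unit ball under some compact operator `X → X`. -/
def PropertyK (X : Type*) [NormedAddCommGroup X] [NormedSpace ℝ X] : Prop :=
  ∀ K : Set X, IsCompact K →
    ∃ v : X →L[ℝ] X, CompactOp v ∧ K ⊆ closure (v '' Metric.closedBall 0 1)

/-- Property (F̄): every compact subset is contained in the closure of the image of the
closed unit ball under some approximable operator `X → X`. -/
def PropertyF (X : Type*) [NormedAddCommGroup X] [NormedSpace ℝ X] : Prop :=
  ∀ K : Set X, IsCompact K →
    ∃ v : X →L[ℝ] X, ApproxOp v ∧ K ⊆ closure (v '' Metric.closedBall 0 1)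

/-- The dual (adjoint/transpose) operator `Y* → X*` of `u : X → Y`. -/
noncomputable def dualOp {X Y : Type*} [NormedAddCommGroup X] [NormedSpace ℝ X]
    [NormedAddCommGroup Y] [NormedSpace ℝ Y] (u : X →L[ℝ] Y) :
    StrongDual ℝ Y →L[ℝ] StrongDual ℝ X :=
  (ContinuousLinearMap.compL ℝ X Y ℝ).flip u

/-- The bidual operator `X** → Y**` of `u : X → Y`. -/
noncomputable def bidualOp {X Y : Type*} [NormedAddCommGroup X] [NormedSpace ℝ X]
    [NormedAddCommGroup Y] [NormedSpace ℝ Y] (u : X →L[ℝ] Y) :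
    StrongDual ℝ (StrongDual ℝ X) →L[ℝ] StrongDual ℝ (StrongDual ℝ Y) :=
  dualOp (dualOp u)

open scoped ENNReal Pointwise
set_option maxHeartbeats 1000000
set_option linter.unusedSectionVars false

noncomputable abbrev Y0 : Type := lp (fun _ : ℕ => ℝ) 1

instance : Fact ((1:ℝ≥0∞) ≤ (1:ℝ≥0∞)) := ⟨le_refl _⟩

noncomputable example : NormedAddCommGroup Y0 := inferInstance
noncomputable example : NormedSpace ℝ Y0 := inferInstance
noncomputable example : CompleteSpace Y0 := inferInstance

lemma Y0_norm (a : Y0) : ‖a‖ = ∑' n, ‖a n‖ := by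
  rw [lp.norm_eq_tsum_rpow (by norm_num) a]
  simp [Real.rpow_one]

lemma Y0_summable (a : Y0) : Summable (fun n => ‖a n‖) := by
  have := (lp.memℓp a).summable (p := 1) (by norm_num)
  simpa using this

lemma Y0_single_norm (n : ℕ) : ‖(lp.single 1 n (1:ℝ) : Y0)‖ = 1 := by
  have := lp.norm_single (p := 1) (E := fun _ : ℕ => ℝ) (by norm_num) n (1:ℝ)
  simpa using this

section U
variable {X : Type*} [NormedAddCommGroup X] [NormedSpace ℝ X] [CompleteSpace X]
variable (k : ℕ → X) (M : ℝ)

lemma summ_norm (hM : ∀ n, ‖k n‖ ≤ M) (a : Y0) :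
    Summable (fun n => ‖a n • k n‖) := by
  apply Summable.of_nonneg_of_le (fun n => norm_nonneg _) (fun n => ?_)
    ((Y0_summable a).mul_right M)
  rw [norm_smul]
  exact mul_le_mul_of_nonneg_left (hM n) (norm_nonneg _)

lemma summ (hM : ∀ n, ‖k n‖ ≤ M) (a : Y0) : Summable (fun n => a n • k n) :=
  (summ_norm k M hM a).of_norm

noncomputable def Uop (hM : ∀ n, ‖k n‖ ≤ M) : Y0 →L[ℝ] X :=
  LinearMap.mkContinuous
    { toFun := fun a => ∑' n, a n • k n
      map_add' := fun a b => by
        have h1 : (fun n => ((a + b) : Y0) n • k n)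
            = fun n => a n • k n + b n • k n := by
          funext n; rw [lp.coeFn_add, Pi.add_apply, add_smul]
        simp only [h1]
        exact Summable.tsum_add (summ k M hM a) (summ k M hM b)
      map_smul' := fun c a => by
        have h1 : (fun n => ((c • a) : Y0) n • k n)
            = fun n => c • (a n • k n) := by
          funext n; rw [lp.coeFn_smul, Pi.smul_apply, smul_smul, smul_eq_mul]
        simp only [RingHom.id_apply, h1]
        exact tsum_const_smul'' c }
    M (fun a => by
      simp only [LinearMap.coe_mk, AddHom.coe_mk]
      calc ‖∑' n, a n • k n‖ ≤ ∑' n, ‖a n • k n‖ :=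
            norm_tsum_le_tsum_norm (summ_norm k M hM a)
        _ ≤ ∑' n, M * ‖a n‖ := by
            apply Summable.tsum_le_tsum (fun n => ?_) (summ_norm k M hM a)
              ((Y0_summable a).mul_left M)
            rw [norm_smul, mul_comm]
            exact mul_le_mul_of_nonneg_right (hM n) (norm_nonneg _)
        _ = M * ‖a‖ := by rw [tsum_mul_left, Y0_norm]
      )

variable (hM : ∀ n, ‖k n‖ ≤ M)

lemma Uop_apply (a : Y0) : Uop k M hM a = ∑' n, a n • k n := rfl

lemma Uop_single (n : ℕ) : Uop k M hM (lp.single 1 n 1) = k n := by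
  rw [Uop_apply]
  rw [tsum_eq_single n]
  · rw [lp.single_apply_self, one_smul]
  · intro m hm
    rw [lp.single_apply_ne _ _ _ hm, zero_smul]
set_option linter.unusedSectionVars false

lemma partial_mem {K : Set X} (hk : ∀ n, k n ∈ K) (a : Y0) (s : Finset ℕ)
    (hs : ∑ n ∈ s, ‖a n‖ ≤ 1) :
    ∑ n ∈ s, a n • k n ∈ convexHull ℝ (K ∪ -K ∪ {0}) := by
  classical
  set D := K ∪ -K ∪ {0} with hD
  set m₀ := (s.sup id) + 1 with hm₀
  have hm₀s : m₀ ∉ s := by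
    intro hmem
    have := Finset.le_sup (f := id) hmem
    simp only [id] at this; omega
  set w : ℕ → ℝ := fun n => if n ∈ s then ‖a n‖ else 1 - ∑ j ∈ s, ‖a j‖ with hw
  set p : ℕ → X := fun n => if n ∈ s then (if 0 ≤ a n then k n else -k n) else 0 with hp
  have hws : ∀ n ∈ s, w n = ‖a n‖ := fun n hn => by simp [hw, hn]
  have hsum : ∑ n ∈ insert m₀ s, w n = 1 := by
    rw [Finset.sum_insert hm₀s, Finset.sum_congr rfl hws]
    simp [hw, hm₀s]
  have key : ∑ n ∈ s, a n • k n = (insert m₀ s).centerMass w p := by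
    rw [Finset.centerMass_eq_of_sum_1 _ _ hsum, Finset.sum_insert hm₀s]
    have : p m₀ = 0 := by simp [hp, hm₀s]
    rw [this, smul_zero, zero_add]
    refine (Finset.sum_congr rfl fun n hn => ?_).symm
    rw [hws n hn]
    simp only [hp, if_pos hn]
    by_cases h : 0 ≤ a n
    · rw [if_pos h, Real.norm_eq_abs, abs_of_nonneg h]
    · rw [if_neg h, Real.norm_eq_abs, abs_of_neg (lt_of_not_ge h),
        smul_neg, neg_smul, neg_neg]
  rw [key]
  refine Finset.centerMass_mem_convexHull _ (fun i _ => ?_) (by rw [hsum]; norm_num)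
    (fun i _ => ?_)
  · by_cases h : i ∈ s
    · simp [hw, h]
    · simp only [hw, if_neg h, sub_nonneg]; exact hs
  · by_cases h : i ∈ s
    · simp only [hp, if_pos h, hD]
      by_cases h2 : 0 ≤ a i
      · rw [if_pos h2]; exact Or.inl (Or.inl (hk i))
      · rw [if_neg h2]; exact Or.inl (Or.inr (Set.neg_mem_neg.mpr (hk i)))
    · simp [hp, h, hD]

omit [CompleteSpace X] in
lemma dense_seq_of_compact {K : Set X} (hK : IsCompact K) (hne : K.Nonempty) :
    ∃ k : ℕ → X, (∀ n, k n ∈ K) ∧ K ⊆ closure (Set.range k) := by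
  have hsep : TopologicalSpace.IsSeparable K := hK.isSeparable
  haveI := hsep.separableSpace
  haveI : Nonempty ↥K := hne.to_subtype
  obtain ⟨kk, hkk⟩ := TopologicalSpace.exists_dense_seq ↥K
  refine ⟨fun n => (kk n : X), fun n => (kk n).2, fun x hx => ?_⟩
  rw [Metric.mem_closure_iff]
  intro ε hε
  obtain ⟨n, hn⟩ := Metric.denseRange_iff.mp hkk ⟨x, hx⟩ ε hε
  exact ⟨kk n, Set.mem_range_self n, by simpa [Subtype.dist_eq] using hn⟩

lemma exists_compact_cover {K : Set X} (hK : IsCompact K) (hne : K.Nonempty) :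
    ∃ u : Y0 →L[ℝ] X, CompactOp u ∧ K ⊆ closure (u '' Metric.closedBall 0 1) := by
  obtain ⟨k, hkK, hdense⟩ := dense_seq_of_compact hK hne
  obtain ⟨M, hMK⟩ := Bornology.IsBounded.exists_norm_le hK.isBounded
  have hM : ∀ n, ‖k n‖ ≤ M := fun n => hMK _ (hkK n)
  set u := Uop k M hM with hu
  have hC : IsCompact (closure (convexHull ℝ (K ∪ -K ∪ {0}))) := by
    apply TotallyBounded.isCompact_of_isClosed _ isClosed_closure
    exact (totallyBounded_convexHull.mpr
      (((hK.union hK.neg).union isCompact_singleton).totallyBounded)).closure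
  have himg : u '' Metric.closedBall 0 1 ⊆ closure (convexHull ℝ (K ∪ -K ∪ {0})) := by
    rintro - ⟨a, ha, rfl⟩
    rw [Metric.mem_closedBall, dist_zero_right] at ha
    have hsum : HasSum (fun n => a n • k n) (u a) := (summ k M hM a).hasSum
    refine mem_closure_of_tendsto hsum (Filter.Eventually.of_forall fun s => ?_)
    apply partial_mem k hkK a s
    calc ∑ n ∈ s, ‖a n‖ ≤ ∑' n, ‖a n‖ := Summable.sum_le_tsum s
          (fun n _ => norm_nonneg _) (Y0_summable a)
      _ = ‖a‖ := (Y0_norm a).symm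
      _ ≤ 1 := ha
  refine ⟨u, ?_, ?_⟩
  · exact hC.of_isClosed_subset isClosed_closure (closure_minimal himg isClosed_closure)
  · refine hdense.trans (closure_mono ?_)
    rintro - ⟨n, rfl⟩
    exact ⟨lp.single 1 n 1, by simp [Y0_single_norm n], Uop_single k M hM n⟩

end U

-- scaled-ball compactness
lemma compactOp_scaled_ball {Q X : Type*} [NormedAddCommGroup Q] [NormedSpace ℝ Q]
    [NormedAddCommGroup X] [NormedSpace ℝ X] (v : Q →L[ℝ] X) (hv : CompactOp v)
    {R : ℝ} (hR : 0 < R) : IsCompact (closure (v '' Metric.closedBall 0 R)) := by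
  have him : v '' Metric.closedBall 0 R
      = R • (v '' Metric.closedBall 0 1) := by
    rw [← Set.image_smul, Set.image_image]
    ext y; constructor
    · rintro ⟨z, hz, rfl⟩
      rw [Metric.mem_closedBall, dist_zero_right] at hz
      refine ⟨R⁻¹ • z, ?_, ?_⟩
      · rw [Metric.mem_closedBall, dist_zero_right, norm_smul, norm_inv,
          Real.norm_eq_abs, abs_of_pos hR, ← div_eq_inv_mul, div_le_one hR]
        exact hz
      · show R • v (R⁻¹ • z) = v z
        rw [map_smul, smul_smul, mul_inv_cancel₀ hR.ne', one_smul]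
    · rintro ⟨z, hz, rfl⟩
      rw [Metric.mem_closedBall, dist_zero_right] at hz
      refine ⟨R • z, ?_, ?_⟩
      · rw [Metric.mem_closedBall, dist_zero_right, norm_smul,
          Real.norm_eq_abs, abs_of_pos hR]
        calc R * ‖z‖ ≤ R * 1 := by
              exact mul_le_mul_of_nonneg_left hz hR.le
          _ = R := mul_one R
      · rw [map_smul]
  rw [him, closure_smul₀' hR.ne']
  exact hv.smul R

-- the down map for ULift
noncomputable def downCLM (E : Type) [NormedAddCommGroup E] [NormedSpace ℝ E] :
    ULift.{v} E →L[ℝ] E :=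
  LinearMap.mkContinuous (ULift.moduleEquiv : ULift.{v} E ≃ₗ[ℝ] E).toLinearMap 1
    (fun x => by simpa using le_refl ‖x‖)

lemma downCLM_ball (E : Type) [NormedAddCommGroup E] [NormedSpace ℝ E] :
    (downCLM.{v} E) '' Metric.closedBall 0 1 = Metric.closedBall 0 1 := by
  ext y; constructor
  · rintro ⟨z, hz, rfl⟩
    rw [Metric.mem_closedBall, dist_zero_right] at hz ⊢
    exact hz
  · intro hy
    rw [Metric.mem_closedBall, dist_zero_right] at hy
    exact ⟨ULift.up y, by simpa [Metric.mem_closedBall, ULift.norm_def] using hy, rfl⟩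

/-- Proposition 2(b).  Here the operator `v** : Q** → X` (the bidual of a compact operator
`v : Q → X`, which takes values in the canonical image of `X`) is encoded by composing with
the canonical embedding `ι : X → X**`: the equation `u = v** ∘ w` is written
`ι ∘ u = v** ∘ w` in `X**`. -/
theorem property_K_of_quotient_factorization (X : Type u) [NormedAddCommGroup X]
    [NormedSpace ℝ X] [CompleteSpace X]
    (h : ∀ (Y : Type v) [NormedAddCommGroup Y] [NormedSpace ℝ Y] [CompleteSpace Y]
      (u : Y →L[ℝ] X), CompactOp u →
      ∃ (Q : Type u) (_ : NormedAddCommGroup Q) (_ : NormedSpace ℝ Q) (_ : CompleteSpace Q)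
        (q : X →L[ℝ] Q), Surjective q ∧
        ∃ (v : Q →L[ℝ] X) (w : Y →L[ℝ] StrongDual ℝ (StrongDual ℝ Q)),
          CompactOp v ∧ CompactOp w ∧
          (NormedSpace.inclusionInDoubleDual ℝ X).comp u = (bidualOp v).comp w) :
    PropertyK X := by
  intro K hK
  rcases K.eq_empty_or_nonempty with rfl | hne
  · refine ⟨0, ?_, by simp⟩
    have h0 : (0 : X →L[ℝ] X) '' Metric.closedBall 0 1 ⊆ {0} := by
      rintro - ⟨z, -, rfl⟩; simp
    exact isCompact_singleton.of_isClosed_subset isClosed_closure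
      (closure_minimal h0 isClosed_singleton)
  obtain ⟨u0, hu0c, hu0K⟩ := exists_compact_cover hK hne
  set u : ULift.{v} Y0 →L[ℝ] X := u0.comp (downCLM Y0) with hu
  have himg : u '' Metric.closedBall 0 1 = u0 '' Metric.closedBall 0 1 := by
    ext y; constructor
    · rintro ⟨b, hb, rfl⟩
      rw [Metric.mem_closedBall, dist_zero_right] at hb
      exact ⟨b.down, by simpa [Metric.mem_closedBall, dist_zero_right] using hb, rfl⟩
    · rintro ⟨z, hz, rfl⟩
      rw [Metric.mem_closedBall, dist_zero_right] at hz
      exact ⟨ULift.up z, by simpa [Metric.mem_closedBall, ULift.norm_def] using hz, rfl⟩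
  have huc : CompactOp u := by
    unfold CompactOp; rw [himg]; exact hu0c
  have huK : K ⊆ closure (u '' Metric.closedBall 0 1) := by rw [himg]; exact hu0K
  obtain ⟨Q, _, _, _, q, hqsurj, v, w, hvc, hwc, heq⟩ := h (ULift.{v} Y0) u huc
  obtain ⟨C, hC0, hC⟩ := ContinuousLinearMap.exists_preimage_norm_le q hqsurj
  set c : ℝ := ‖w‖ + 1 with hc
  have hc0 : 0 < c := by positivity
  have hwc' : ‖w‖ ≤ c := by rw [hc]; linarith
  -- Step 1: K is contained in the closure of v '' closedBall 0 c
  have hKA : K ⊆ closure (v '' Metric.closedBall 0 c) := by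
    intro x hx
    by_contra hxA
    have hconv : Convex ℝ (closure (v '' Metric.closedBall 0 c)) :=
      ((convex_closedBall (0:Q) c).linear_image (v : Q →ₗ[ℝ] X)).closure
    obtain ⟨f, c₀, hfa, hfx⟩ :=
      geometric_hahn_banach_closed_point hconv isClosed_closure hxA
    have h0mem : (0:X) ∈ closure (v '' Metric.closedBall 0 c) :=
      subset_closure ⟨0, by simp [hc0.le], map_zero v⟩
    have hc₀ : 0 < c₀ := by simpa using hfa 0 h0mem
    set g : Q →L[ℝ] ℝ := f.comp v with hg
    have hgball : ∀ z' ∈ Metric.closedBall (0:Q) c, g z' < c₀ := fun z' hz' =>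
      hfa _ (subset_closure ⟨z', hz', rfl⟩)
    have hgnorm : ‖g‖ ≤ c₀ / c := by
      apply ContinuousLinearMap.opNorm_le_bound _ (div_nonneg hc₀.le hc0.le)
      intro z
      rcases eq_or_ne z 0 with rfl | hz
      · simp
      · have hzpos : 0 < ‖z‖ := norm_pos_iff.mpr hz
        set z' := (c / ‖z‖) • z with hz'def
        have hz'mem : z' ∈ Metric.closedBall (0:Q) c := by
          rw [Metric.mem_closedBall, dist_zero_right, hz'def, norm_smul,
            Real.norm_eq_abs, abs_of_pos (div_pos hc0 hzpos), div_mul_cancel₀ _ hzpos.ne']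
        have hz'mem' : -z' ∈ Metric.closedBall (0:Q) c := by
          rwa [Metric.mem_closedBall, dist_zero_right, norm_neg, ← dist_zero_right,
            ← Metric.mem_closedBall]
        have h2 : g z' < c₀ := hgball z' hz'mem
        have h3 : -(g z') < c₀ := by
          have := hgball (-z') hz'mem'
          rwa [map_neg] at this
        have h4 : |g z'| ≤ c₀ := abs_le.mpr ⟨by linarith, h2.le⟩
        have h5 : g z' = (c / ‖z‖) * g z := by
          rw [hz'def, map_smul, smul_eq_mul]
        rw [h5, abs_mul, abs_of_pos (div_pos hc0 hzpos)] at h4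
        rw [Real.norm_eq_abs]
        rw [div_mul_eq_mul_div, div_le_iff₀ hzpos] at h4
        rw [div_mul_eq_mul_div, le_div_iff₀ hc0, mul_comm c₀ ‖z‖]
        linarith
    have hfb : ∀ b ∈ Metric.closedBall (0 : ULift.{v} Y0) 1, f (u b) ≤ c₀ := by
      intro b hb
      rw [Metric.mem_closedBall, dist_zero_right] at hb
      have e1 : inclusionInDoubleDual ℝ X (u b) = bidualOp v (w b) :=
        DFunLike.congr_fun heq b
      have e2 : f (u b) = (w b) g := by
        have := DFunLike.congr_fun e1 f
        rw [NormedSpace.dual_def] at this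
        rw [this]
        rfl
      have e3 : (w b) g ≤ ‖w b‖ * ‖g‖ :=
        le_trans (le_abs_self _) ((w b).le_opNorm g)
      have e4 : ‖w b‖ ≤ ‖w‖ := by
        calc ‖w b‖ ≤ ‖w‖ * ‖b‖ := w.le_opNorm b
          _ ≤ ‖w‖ * 1 := by exact mul_le_mul_of_nonneg_left hb (norm_nonneg w)
          _ = ‖w‖ := mul_one _
      have e5 : ‖w b‖ * ‖g‖ ≤ c * (c₀ / c) := by
        apply mul_le_mul (e4.trans hwc') hgnorm (norm_nonneg g) hc0.le
      rw [e2]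
      calc (w b) g ≤ c * (c₀ / c) := le_trans e3 e5
        _ = c₀ := by field_simp
    have hxle : f x ≤ c₀ := by
      have hS : IsClosed {y : X | f y ≤ c₀} := isClosed_le f.continuous continuous_const
      have : u '' Metric.closedBall 0 1 ⊆ {y : X | f y ≤ c₀} := by
        rintro - ⟨b, hb, rfl⟩; exact hfb b hb
      exact (closure_minimal this hS) (huK hx)
    linarith
  -- Step 2: assemble the final operator
  have hCc : 0 < C * c := mul_pos hC0 hc0
  set R : ℝ := C * c * ‖q‖ + 1 with hR
  have hR0 : 0 < R := by positivity
  set T : X →L[ℝ] X := (C * c) • (v.comp q) with hT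
  have hTB : T '' Metric.closedBall 0 1 ⊆ v '' Metric.closedBall 0 R := by
    rintro - ⟨x, hx, rfl⟩
    rw [Metric.mem_closedBall, dist_zero_right] at hx
    refine ⟨(C * c) • q x, ?_, ?_⟩
    · rw [Metric.mem_closedBall, dist_zero_right, norm_smul, Real.norm_eq_abs,
        abs_of_pos hCc]
      calc C * c * ‖q x‖ ≤ C * c * (‖q‖ * ‖x‖) :=
            mul_le_mul_of_nonneg_left (q.le_opNorm x) hCc.le
        _ ≤ C * c * (‖q‖ * 1) := by
            apply mul_le_mul_of_nonneg_left _ hCc.le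
            exact mul_le_mul_of_nonneg_left hx (norm_nonneg q)
        _ = C * c * ‖q‖ := by ring
        _ ≤ R := by rw [hR]; linarith
    · rw [map_smul, hT]; rfl
  have hvR : IsCompact (closure (v '' Metric.closedBall 0 R)) :=
    compactOp_scaled_ball v hvc hR0
  refine ⟨T, ?_, ?_⟩
  · exact hvR.of_isClosed_subset isClosed_closure
      (closure_minimal (hTB.trans subset_closure) isClosed_closure)
  · refine hKA.trans (closure_mono ?_)
    rintro - ⟨z, hz, rfl⟩
    rw [Metric.mem_closedBall, dist_zero_right] at hz
    obtain ⟨x', hqx', hx'⟩ := hC z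
    refine ⟨(C * c)⁻¹ • x', ?_, ?_⟩
    · rw [Metric.mem_closedBall, dist_zero_right, norm_smul, norm_inv,
        Real.norm_eq_abs, abs_of_pos hCc, ← div_eq_inv_mul, div_le_one hCc]
      calc ‖x'‖ ≤ C * ‖z‖ := hx'
        _ ≤ C * c := mul_le_mul_of_nonneg_left hz hC0.le
    · rw [hT]
      show (C * c) • (v (q ((C * c)⁻¹ • x'))) = v z
      rw [map_smul, map_smul, smul_smul, mul_inv_cancel₀ hCc.ne', one_smul, hqx']
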